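/- Let α > 0, β ≥ 0, and δ satisfy 0 < δ < 1/α. Then for all natural numbers a ≤ b, the product ∏_{i=a}^{b} (1 - αδ/(1+(i+β)δ)) equals [Γ(b+1+δ^{-1}+β-α)/Γ(b+1+δ^{-1}+β)] · [Γ(a+δ^{-1}+β)/Γ(a+δ^{-1}+β-α)]. -/

import Mathlib

theorem prod_eq_gamma_ratio (α β δ : ℝ) (hα : 0 < α) (hβ : 0 ≤ β)
    (hδ0 : 0 < δ) (hδ : δ < α⁻¹) (a b : ℕ) (hab : a ≤ b) :
    ∏ i ∈ Finset.Icc a b, (1 - α * δ / (1 + ((i : ℝ) + β) * δ)) =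
      Real.Gamma ((b : ℝ) + 1 + δ⁻¹ + β - α) / Real.Gamma ((b : ℝ) + 1 + δ⁻¹ + β) *
        (Real.Gamma ((a : ℝ) + δ⁻¹ + β) / Real.Gamma ((a : ℝ) + δ⁻¹ + β - α)) := by
  have hinv : α < δ⁻¹ := by
    rw [inv_eq_one_div, lt_div_iff₀ hδ0]
    have h1 : δ * α < α⁻¹ * α := by nlinarith
    rw [inv_mul_cancel₀ hα.ne'] at h1
    linarith
  set c : ℝ := δ⁻¹ + β with hc
  have hcpos : α < c := by have := hβ; simp only [hc]; linarith
  -- positivity helpers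
  have hpos : ∀ n : ℕ, (0:ℝ) < (n : ℝ) + c - α := fun n => by
    have : (0:ℝ) ≤ (n:ℝ) := Nat.cast_nonneg n; linarith
  have hpos' : ∀ n : ℕ, (0:ℝ) < (n : ℝ) + c := fun n => by
    have := hpos n; linarith
  -- rewrite each factor
  have hfac : ∀ i : ℕ, (1 - α * δ / (1 + ((i : ℝ) + β) * δ))
      = ((i : ℝ) + c - α) / ((i : ℝ) + c) := by
    intro i
    have hden : 1 + ((i : ℝ) + β) * δ = δ * ((i : ℝ) + c) := by
      rw [hc, mul_add, mul_add, mul_inv_cancel₀ hδ0.ne']; ring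
    rw [hden]
    have h1 : ((i : ℝ) + c) ≠ 0 := (hpos' i).ne'
    field_simp
  simp only [hfac]
  have key : ∀ x : ℝ, x + δ⁻¹ + β = x + c := fun x => by rw [hc]; ring
  simp only [key]
  induction b, hab using Nat.le_induction with
  | base =>
      rw [Finset.Icc_self, Finset.prod_singleton]
      have e1 : (a : ℝ) + 1 + c - α = ((a : ℝ) + c - α) + 1 := by ring
      have e2 : (a : ℝ) + 1 + c = ((a : ℝ) + c) + 1 := by ring
      rw [e1, e2, Real.Gamma_add_one (hpos a).ne', Real.Gamma_add_one (hpos' a).ne']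
      have g1 : Real.Gamma ((a : ℝ) + c - α) ≠ 0 :=
        (Real.Gamma_pos_of_pos (hpos a)).ne'
      have g2 : Real.Gamma ((a : ℝ) + c) ≠ 0 :=
        (Real.Gamma_pos_of_pos (hpos' a)).ne'
      field_simp
  | succ n hn ih =>
      rw [Finset.prod_Icc_succ_top (by omega : a ≤ n + 1), ih]
      have e1 : ((n + 1 : ℕ) : ℝ) + 1 + c - α = (((n:ℝ) + 1) + c - α) + 1 := by
        push_cast; ring
      have e2 : ((n + 1 : ℕ) : ℝ) + 1 + c = (((n:ℝ) + 1) + c) + 1 := by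
        push_cast; ring
      have e3 : ((n + 1 : ℕ) : ℝ) + c - α = ((n:ℝ) + 1) + c - α := by push_cast; ring
      have e4 : ((n + 1 : ℕ) : ℝ) + c = ((n:ℝ) + 1) + c := by push_cast; ring
      have hp1 : (0:ℝ) < ((n:ℝ) + 1) + c - α := by have := hpos (n+1); push_cast at this; linarith
      have hp2 : (0:ℝ) < ((n:ℝ) + 1) + c := by linarith
      rw [e1, e2, e3, e4, Real.Gamma_add_one hp1.ne', Real.Gamma_add_one hp2.ne']
      have g1 : Real.Gamma (((n:ℝ) + 1) + c - α) ≠ 0 := (Real.Gamma_pos_of_pos hp1).ne'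
      have g2 : Real.Gamma (((n:ℝ) + 1) + c) ≠ 0 := (Real.Gamma_pos_of_pos hp2).ne'
      have g3 : Real.Gamma ((a : ℝ) + c - α) ≠ 0 := (Real.Gamma_pos_of_pos (hpos a)).ne'
      have g4 : Real.Gamma ((a : ℝ) + c) ≠ 0 := (Real.Gamma_pos_of_pos (hpos' a)).ne'
      field_simp
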